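/- Let (X, 𝔛) be a measurable space and let M₁ ≪ M₂ be two measure types (equivalence classes of probability measures under mutual absolute continuity) on (X,𝔛). Then the set {M' : M' a measure type with M₁ ≪ M' ≪ M₂}, partially ordered by absolute continuity ≪, is a complete lattice. -/

import Mathlib

open MeasureTheory Measure

namespace MTIaux

variable {X : Type*} [MeasurableSpace X]

/-- The support set of `μ` relative to `ν`: where the Radon–Nikodym derivative is nonzero. -/
noncomputable def spt (μ ν : Measure X) : Set X := {x | μ.rnDeriv ν x ≠ 0}

lemma spt_meas (μ ν : Measure X) : MeasurableSet (spt μ ν) :=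
  (measurable_rnDeriv μ ν (measurableSet_singleton 0)).compl

lemma zeroIff {μ ν : Measure X} [μ.HaveLebesgueDecomposition ν] (hμ : μ ≪ ν) (s : Set X) :
    μ s = 0 ↔ ν (spt μ ν ∩ s) = 0 := by
  conv_lhs => rw [← Measure.withDensity_rnDeriv_eq μ ν hμ]
  exact withDensity_apply_eq_zero (measurable_rnDeriv μ ν)

lemma aeSub {μ μ' ν : Measure X} [μ.HaveLebesgueDecomposition ν] [μ'.HaveLebesgueDecomposition ν]
    (hμ : μ ≪ ν) (hμ' : μ' ≪ ν) (h : μ ≪ μ') :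
    ν (spt μ ν \ spt μ' ν) = 0 := by
  have h1 : μ' (spt μ' ν)ᶜ = 0 := by
    rw [zeroIff hμ']; simp
  have h2 := h h1
  rw [zeroIff hμ] at h2
  simpa [Set.diff_eq] using h2

/-- The normalized restriction of `ν` to `B`. -/
noncomputable def npm (ν : Measure X) (B : Set X) : Measure X := (ν B)⁻¹ • ν.restrict B

lemma npm_apply (ν : Measure X) {B : Set X} (hB : MeasurableSet B) (s : Set X) :
    npm ν B s = (ν B)⁻¹ * ν (s ∩ B) := by
  simp [npm, Measure.restrict_apply' hB]

lemma npm_isProb {ν : Measure X} {B : Set X} (hB : MeasurableSet B) (h0 : ν B ≠ 0)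
    (ht : ν B ≠ ⊤) : IsProbabilityMeasure (npm ν B) := by
  constructor
  rw [npm_apply _ hB, Set.univ_inter, ENNReal.inv_mul_cancel h0 ht]

lemma npm_zero_iff {ν : Measure X} {B : Set X} (hB : MeasurableSet B) (ht : ν B ≠ ⊤)
    (s : Set X) : npm ν B s = 0 ↔ ν (s ∩ B) = 0 := by
  rw [npm_apply _ hB]
  simp [ENNReal.inv_eq_zero, ht]

lemma npm_ac_self {ν : Measure X} {B : Set X} (hB : MeasurableSet B) (ht : ν B ≠ ⊤) :
    npm ν B ≪ ν := by
  refine Measure.AbsolutelyContinuous.mk fun s _ h => ?_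
  rw [npm_zero_iff hB ht]
  exact measure_mono_null Set.inter_subset_left h

lemma npm_ac {μ ν : Measure X} [μ.HaveLebesgueDecomposition ν] (hμ : μ ≪ ν) {B : Set X}
    (hB : MeasurableSet B) (ht : ν B ≠ ⊤) (h0 : ν (B \ spt μ ν) = 0) : npm ν B ≪ μ := by
  refine Measure.AbsolutelyContinuous.mk fun s _ h => ?_
  rw [zeroIff hμ] at h
  rw [npm_zero_iff hB ht]
  refine measure_mono_null ?_ (measure_union_null h h0)
  rintro x ⟨hxs, hxB⟩
  by_cases hx : x ∈ spt μ ν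
  · exact Or.inl ⟨hx, hxs⟩
  · exact Or.inr ⟨hxB, hx⟩

lemma ac_npm {μ ν : Measure X} [μ.HaveLebesgueDecomposition ν] (hμ : μ ≪ ν) {B : Set X}
    (hB : MeasurableSet B) (ht : ν B ≠ ⊤) (h0 : ν (spt μ ν \ B) = 0) : μ ≪ npm ν B := by
  refine Measure.AbsolutelyContinuous.mk fun s _ h => ?_
  rw [npm_zero_iff hB ht] at h
  rw [zeroIff hμ]
  refine measure_mono_null ?_ (measure_union_null h h0)
  rintro x ⟨hx, hxs⟩
  by_cases hxB : x ∈ B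
  · exact Or.inl ⟨hxs, hxB⟩
  · exact Or.inr ⟨hx, hxB⟩

end MTIaux


open MeasureTheory Measure
open scoped ENNReal

theorem measureType_interval_completeLattice {X : Type*} [MeasurableSpace X]
    (ν₁ ν₂ : Measure X) [IsProbabilityMeasure ν₁] [IsProbabilityMeasure ν₂]
    (h12 : ν₁ ≪ ν₂) (S : Set (Measure X))
    (hS : ∀ μ ∈ S, IsProbabilityMeasure μ ∧ ν₁ ≪ μ ∧ μ ≪ ν₂) :
    (∃ g : Measure X, IsProbabilityMeasure g ∧ ν₁ ≪ g ∧ g ≪ ν₂ ∧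
      (∀ μ ∈ S, g ≪ μ) ∧
      ∀ h : Measure X, IsProbabilityMeasure h → ν₁ ≪ h → h ≪ ν₂ →
        (∀ μ ∈ S, h ≪ μ) → h ≪ g) ∧
    (∃ l : Measure X, IsProbabilityMeasure l ∧ ν₁ ≪ l ∧ l ≪ ν₂ ∧
      (∀ μ ∈ S, μ ≪ l) ∧
      ∀ h : Measure X, IsProbabilityMeasure h → ν₁ ≪ h → h ≪ ν₂ →
        (∀ μ ∈ S, μ ≪ h) → l ≪ h) := by
  classical
  rcases S.eq_empty_or_nonempty with rfl | ⟨μ₀, hμ₀⟩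
  · exact ⟨⟨ν₂, inferInstance, h12, Measure.AbsolutelyContinuous.rfl, by simp,
        fun h _ _ h2 _ => h2⟩,
      ⟨ν₁, inferInstance, Measure.AbsolutelyContinuous.rfl, h12, by simp,
        fun h _ h1 _ _ => h1⟩⟩
  have hspt1 : ν₂ (MTIaux.spt ν₁ ν₂) ≠ 0 := by
    intro h
    have h1 : ν₁ Set.univ = 0 :=
      (MTIaux.zeroIff h12 _).2 (measure_mono_null Set.inter_subset_left h)
    simp [measure_univ] at h1
  constructor
  -- The infimum
  · set T : Set ℝ≥0∞ :=
      Set.range (fun u : ℕ → S => ν₂ (⋂ n, MTIaux.spt (u n : Measure X) ν₂)) with hT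
    set t := sInf T with htdef
    have hmem0 : ν₂ (⋂ _n : ℕ, MTIaux.spt μ₀ ν₂) ∈ T := ⟨fun _ => ⟨μ₀, hμ₀⟩, rfl⟩
    have ht_top : t ≠ ⊤ := ne_top_of_le_ne_top (measure_ne_top ν₂ _) (sInf_le hmem0)
    have hv : ∀ k : ℕ, ∃ u : ℕ → S,
        ν₂ (⋂ n, MTIaux.spt (u n : Measure X) ν₂) < t + ((k : ℝ≥0∞) + 1)⁻¹ := by
      intro k
      have hlt : t < t + ((k : ℝ≥0∞) + 1)⁻¹ :=
        ENNReal.lt_add_right ht_top (by simp)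
      obtain ⟨a, ⟨u, rfl⟩, ha⟩ := sInf_lt_iff.1 hlt
      exact ⟨u, ha⟩
    choose v hv using hv
    set w : ℕ → S := fun n => v (Nat.unpair n).1 (Nat.unpair n).2 with hw
    set B : Set X := ⋂ n, MTIaux.spt ((w n : Measure X)) ν₂ with hB
    have hB_meas : MeasurableSet B := MeasurableSet.iInter fun n => MTIaux.spt_meas _ _
    have hBT : ν₂ B ∈ T := ⟨w, rfl⟩
    have hBt : ν₂ B ≤ t := by
      refine ENNReal.le_of_forall_pos_le_add fun ε hε _ => ?_
      obtain ⟨k, hk⟩ := ENNReal.exists_inv_nat_lt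
        (show (ε : ℝ≥0∞) ≠ 0 by exact_mod_cast hε.ne')
      have hsub : B ⊆ ⋂ n, MTIaux.spt ((v k n : Measure X)) ν₂ := by
        intro x hx
        refine Set.mem_iInter.2 fun n => ?_
        have := Set.mem_iInter.1 hx (Nat.pair k n)
        simpa [hw, Nat.unpair_pair] using this
      calc ν₂ B ≤ ν₂ (⋂ n, MTIaux.spt ((v k n : Measure X)) ν₂) := measure_mono hsub
        _ ≤ t + ((k : ℝ≥0∞) + 1)⁻¹ := (hv k).le
        _ ≤ t + ε := by
            refine add_le_add_right (le_of_lt (lt_of_le_of_lt ?_ hk)) t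
            exact ENNReal.inv_le_inv.2 le_self_add
    have key_inf : ∀ μ ∈ S, ν₂ (B \ MTIaux.spt μ ν₂) = 0 := by
      intro μ hμ
      have hmem : ν₂ (MTIaux.spt μ ν₂ ∩ B) ∈ T := by
        set u' : ℕ → S := fun n => Nat.casesOn n ⟨μ, hμ⟩ w with hu'
        have hset : (⋂ n, MTIaux.spt ((u' n : Measure X)) ν₂) = MTIaux.spt μ ν₂ ∩ B := by
          ext x
          simp only [Set.mem_iInter, Set.mem_inter_iff, hB, Set.mem_iInter]
          constructor
          · intro h
            exact ⟨h 0, fun n => h (n + 1)⟩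
          · rintro ⟨h0, h⟩ n
            cases n with
            | zero => exact h0
            | succ n => exact h n
        exact ⟨u', congrArg ν₂ hset⟩
      have h1 : ν₂ B ≤ ν₂ (B ∩ MTIaux.spt μ ν₂) := by
        rw [Set.inter_comm]
        exact hBt.trans (sInf_le hmem)
      have h2 : ν₂ (B ∩ MTIaux.spt μ ν₂) + ν₂ (B \ MTIaux.spt μ ν₂) = ν₂ B :=
        measure_inter_add_diff B (MTIaux.spt_meas μ ν₂)
      have h3 : ν₂ (B ∩ MTIaux.spt μ ν₂) + ν₂ (B \ MTIaux.spt μ ν₂)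
          ≤ ν₂ (B ∩ MTIaux.spt μ ν₂) + 0 := by
        rw [h2, add_zero]; exact h1
      have := ENNReal.le_of_add_le_add_left (measure_ne_top ν₂ _) h3
      exact le_antisymm this zero_le
    have hsub_all : ∀ ρ : Measure X, IsProbabilityMeasure ρ → ρ ≪ ν₂ →
        (∀ μ ∈ S, ρ ≪ μ) → ν₂ (MTIaux.spt ρ ν₂ \ B) = 0 := by
      intro ρ hρprob hρν hall
      haveI := hρprob
      have hs : MTIaux.spt ρ ν₂ \ B ⊆
          ⋃ n, (MTIaux.spt ρ ν₂ \ MTIaux.spt ((w n : Measure X)) ν₂) := by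
        rintro x ⟨hx1, hx2⟩
        rw [hB, Set.mem_iInter] at hx2
        push_neg at hx2
        obtain ⟨n, hn⟩ := hx2
        exact Set.mem_iUnion.2 ⟨n, hx1, hn⟩
      refine measure_mono_null hs (measure_iUnion_null fun n => ?_)
      haveI := (hS _ (w n).2).1
      exact MTIaux.aeSub hρν (hS _ (w n).2).2.2 (hall _ (w n).2)
    have hA1B : ν₂ (MTIaux.spt ν₁ ν₂ \ B) = 0 :=
      hsub_all ν₁ inferInstance h12 (fun μ hμ => (hS μ hμ).2.1)
    have hB0 : ν₂ B ≠ 0 := by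
      intro h
      apply hspt1
      have hs : MTIaux.spt ν₁ ν₂ ⊆ (MTIaux.spt ν₁ ν₂ \ B) ∪ B := by
        intro x hx
        by_cases hxB : x ∈ B
        · exact Or.inr hxB
        · exact Or.inl ⟨hx, hxB⟩
      exact measure_mono_null hs (measure_union_null hA1B h)
    refine ⟨MTIaux.npm ν₂ B, MTIaux.npm_isProb hB_meas hB0 (measure_ne_top _ _),
      MTIaux.ac_npm h12 hB_meas (measure_ne_top _ _) hA1B,
      MTIaux.npm_ac_self hB_meas (measure_ne_top _ _), fun μ hμ => ?_,
      fun h hprob h1h hh2 hall => ?_⟩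
    · haveI := (hS μ hμ).1
      exact MTIaux.npm_ac (hS μ hμ).2.2 hB_meas (measure_ne_top _ _) (key_inf μ hμ)
    · haveI := hprob
      exact MTIaux.ac_npm hh2 hB_meas (measure_ne_top _ _) (hsub_all h hprob hh2 hall)
  -- The supremum
  · set T : Set ℝ≥0∞ :=
      Set.range (fun u : ℕ → S => ν₂ (⋃ n, MTIaux.spt (u n : Measure X) ν₂)) with hT
    set t := sSup T with htdef
    have ht_le : t ≤ 1 := by
      refine sSup_le ?_
      rintro a ⟨u, rfl⟩
      calc ν₂ _ ≤ ν₂ Set.univ := measure_mono (Set.subset_univ _)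
        _ = 1 := measure_univ
    have ht_top : t ≠ ⊤ := ne_top_of_le_ne_top ENNReal.one_ne_top ht_le
    have hv : ∀ k : ℕ, ∃ u : ℕ → S,
        t - ((k : ℝ≥0∞) + 1)⁻¹ ≤ ν₂ (⋃ n, MTIaux.spt (u n : Measure X) ν₂) := by
      intro k
      by_cases h : t ≤ ((k : ℝ≥0∞) + 1)⁻¹
      · exact ⟨fun _ => ⟨μ₀, hμ₀⟩, by simp [tsub_eq_zero_of_le h]⟩
      · push_neg at h
        have hlt : t - ((k : ℝ≥0∞) + 1)⁻¹ < t :=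
          ENNReal.sub_lt_self ht_top (lt_of_le_of_lt zero_le h).ne' (by simp)
        obtain ⟨a, ⟨u, rfl⟩, ha⟩ := lt_sSup_iff.1 hlt
        exact ⟨u, ha.le⟩
    choose v hv using hv
    set w : ℕ → S := fun n => v (Nat.unpair n).1 (Nat.unpair n).2 with hw
    set B : Set X := ⋃ n, MTIaux.spt ((w n : Measure X)) ν₂ with hB
    have hB_meas : MeasurableSet B := MeasurableSet.iUnion fun n => MTIaux.spt_meas _ _
    have hBT : ν₂ B ∈ T := ⟨w, rfl⟩
    have hBt : t ≤ ν₂ B := by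
      refine ENNReal.le_of_forall_pos_le_add fun ε hε _ => ?_
      obtain ⟨k, hk⟩ := ENNReal.exists_inv_nat_lt
        (show (ε : ℝ≥0∞) ≠ 0 by exact_mod_cast hε.ne')
      have hsub : (⋃ n, MTIaux.spt ((v k n : Measure X)) ν₂) ⊆ B := by
        intro x hx
        obtain ⟨n, hn⟩ := Set.mem_iUnion.1 hx
        refine Set.mem_iUnion.2 ⟨Nat.pair k n, ?_⟩
        simpa [hw, Nat.unpair_pair] using hn
      have h1 : t - ((k : ℝ≥0∞) + 1)⁻¹ ≤ ν₂ B := (hv k).trans (measure_mono hsub)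
      calc t ≤ ν₂ B + ((k : ℝ≥0∞) + 1)⁻¹ := tsub_le_iff_right.1 h1
        _ ≤ ν₂ B + ε := by
            refine add_le_add_right (le_of_lt (lt_of_le_of_lt ?_ hk)) _
            exact ENNReal.inv_le_inv.2 le_self_add
    have key_sup : ∀ μ ∈ S, ν₂ (MTIaux.spt μ ν₂ \ B) = 0 := by
      intro μ hμ
      set u' : ℕ → S := fun n => Nat.casesOn n ⟨μ, hμ⟩ w with hu'
      have hset : (⋃ n, MTIaux.spt ((u' n : Measure X)) ν₂) = MTIaux.spt μ ν₂ ∪ B := by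
        ext x
        simp only [Set.mem_iUnion, Set.mem_union, hB, Set.mem_iUnion]
        constructor
        · rintro ⟨n, hn⟩
          cases n with
          | zero => exact Or.inl hn
          | succ n => exact Or.inr ⟨n, hn⟩
        · rintro (h0 | ⟨n, hn⟩)
          · exact ⟨0, h0⟩
          · exact ⟨n + 1, hn⟩
      have hmem : ν₂ (MTIaux.spt μ ν₂ ∪ B) ∈ T := ⟨u', congrArg ν₂ hset⟩
      have h1 : ν₂ (MTIaux.spt μ ν₂ ∪ B) ≤ ν₂ B := (le_sSup hmem).trans hBt
      have h2 : ν₂ B + ν₂ (MTIaux.spt μ ν₂ \ B) = ν₂ (MTIaux.spt μ ν₂ ∪ B) := by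
        rw [← Set.diff_union_self, measure_union Set.disjoint_sdiff_left hB_meas, add_comm]
      have h3 : ν₂ B + ν₂ (MTIaux.spt μ ν₂ \ B) ≤ ν₂ B + 0 := by
        rw [h2, add_zero]; exact h1
      exact le_antisymm (ENNReal.le_of_add_le_add_left (measure_ne_top ν₂ _) h3) zero_le
    set C : Set X := B ∪ MTIaux.spt ν₁ ν₂ with hC
    have hC_meas : MeasurableSet C := hB_meas.union (MTIaux.spt_meas _ _)
    have hC0 : ν₂ C ≠ 0 := fun h => hspt1 (measure_mono_null Set.subset_union_right h)
    refine ⟨MTIaux.npm ν₂ C, MTIaux.npm_isProb hC_meas hC0 (measure_ne_top _ _),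
      MTIaux.ac_npm h12 hC_meas (measure_ne_top _ _) ?_,
      MTIaux.npm_ac_self hC_meas (measure_ne_top _ _), fun μ hμ => ?_,
      fun h hprob h1h hh2 hall => ?_⟩
    · have he : MTIaux.spt ν₁ ν₂ \ C = ∅ := Set.diff_eq_empty.2 Set.subset_union_right
      rw [he]; exact measure_empty
    · haveI := (hS μ hμ).1
      refine MTIaux.ac_npm (hS μ hμ).2.2 hC_meas (measure_ne_top _ _) ?_
      exact measure_mono_null (Set.diff_subset_diff_right Set.subset_union_left)
        (key_sup μ hμ)
    · haveI := hprob
      refine MTIaux.npm_ac hh2 hC_meas (measure_ne_top _ _) ?_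
      have hs : C \ MTIaux.spt h ν₂ ⊆
          (MTIaux.spt ν₁ ν₂ \ MTIaux.spt h ν₂) ∪
            ⋃ n, (MTIaux.spt ((w n : Measure X)) ν₂ \ MTIaux.spt h ν₂) := by
        rintro x ⟨hx1, hx2⟩
        rw [hC] at hx1
        rcases hx1 with hx1 | hx1
        · rw [hB] at hx1
          obtain ⟨n, hn⟩ := Set.mem_iUnion.1 hx1
          exact Or.inr (Set.mem_iUnion.2 ⟨n, hn, hx2⟩)
        · exact Or.inl ⟨hx1, hx2⟩
      refine measure_mono_null hs (measure_union_null ?_ (measure_iUnion_null fun n => ?_))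
      · exact MTIaux.aeSub h12 hh2 h1h
      · haveI := (hS _ (w n).2).1
        exact MTIaux.aeSub (hS _ (w n).2).2.2 hh2 (hall _ (w n).2)
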